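/- Let a = (a1, a2, a3, a4) ∈ ℝ⁴ and m a positive integer, and let M_m(a,c) be the matrix with rows (m²(a1-c)-1, 1, 1, -1), (-1, m²(a2-c)+1, 1, -1), (1, -1, m²(a3-c)-1, 1), (1, -1, -1, m²(a4-c)+1). If c ∉ {a1, a2, a3, a4}, then det M_m(a,c) = m⁶ (c-a1)(c-a2)(c-a3)(c-a4) [ m² - ( -1/(c-a1) + 1/(c-a2) - 1/(c-a3) + 1/(c-a4) ) ]. Consequently, for such c, det M_m(a,c) = 0 if and only if m² = -1/(c-a1) + 1/(c-a2) - 1/(c-a3) + 1/(c-a4). -/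

import Mathlib

set_option maxHeartbeats 1000000


theorem stmt_3 (a1 a2 a3 a4 c : ℝ) (m : ℕ) (hm : 0 < m)
    (h1 : c ≠ a1) (h2 : c ≠ a2) (h3 : c ≠ a3) (h4 : c ≠ a4) :
    Matrix.det
      !![(m : ℝ)^2 * (a1 - c) - 1, 1, 1, -1;
         -1, (m : ℝ)^2 * (a2 - c) + 1, 1, -1;
         1, -1, (m : ℝ)^2 * (a3 - c) - 1, 1;
         1, -1, -1, (m : ℝ)^2 * (a4 - c) + 1]
      = (m : ℝ)^6 * (c - a1) * (c - a2) * (c - a3) * (c - a4) *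
        ((m : ℝ)^2 - (-(1 / (c - a1)) + 1 / (c - a2) - 1 / (c - a3) + 1 / (c - a4)))
    ∧ (Matrix.det
      !![(m : ℝ)^2 * (a1 - c) - 1, 1, 1, -1;
         -1, (m : ℝ)^2 * (a2 - c) + 1, 1, -1;
         1, -1, (m : ℝ)^2 * (a3 - c) - 1, 1;
         1, -1, -1, (m : ℝ)^2 * (a4 - c) + 1] = 0
      ↔ (m : ℝ)^2 = -(1 / (c - a1)) + 1 / (c - a2) - 1 / (c - a3) + 1 / (c - a4)) := by
  have d1 : c - a1 ≠ 0 := sub_ne_zero.mpr h1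
  have d2 : c - a2 ≠ 0 := sub_ne_zero.mpr h2
  have d3 : c - a3 ≠ 0 := sub_ne_zero.mpr h3
  have d4 : c - a4 ≠ 0 := sub_ne_zero.mpr h4
  have hm0 : (m : ℝ) ≠ 0 := Nat.cast_ne_zero.mpr hm.ne'
  have hdet : Matrix.det
      !![(m : ℝ)^2 * (a1 - c) - 1, 1, 1, -1;
         -1, (m : ℝ)^2 * (a2 - c) + 1, 1, -1;
         1, -1, (m : ℝ)^2 * (a3 - c) - 1, 1;
         1, -1, -1, (m : ℝ)^2 * (a4 - c) + 1]
      = (m : ℝ)^6 * (c - a1) * (c - a2) * (c - a3) * (c - a4) *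
        ((m : ℝ)^2 - (-(1 / (c - a1)) + 1 / (c - a2) - 1 / (c - a3) + 1 / (c - a4))) := by
    rw [Matrix.det_succ_row_zero]
    simp [Fin.sum_univ_succ, Matrix.det_fin_three, Fin.succAbove]
    field_simp
    ring
  refine ⟨hdet, ?_⟩
  rw [hdet]
  have hK : (m : ℝ)^6 * (c - a1) * (c - a2) * (c - a3) * (c - a4) ≠ 0 := by
    positivity
  constructor
  · intro h
    rcases mul_eq_zero.mp h with h | h
    · exact absurd h hK
    · linarith [sub_eq_zero.mp h]
  · intro h
    rw [h]; ring
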